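/- arXiv:1806.07290 — 2 statements merged into one kernel-verified Lean document; each statement's English description precedes it below -/
import Mathlib

section
/- If x ∈ Q2^π with pointwise limit q of the sums q_n, then x ∈ Q0^π and [x]_π = q; that is, the discrete measures μ_n := ∑_i (x(t^n_{i+1}) − x(t^n_i))² δ_{t^n_i} converge vaguely on [0,∞) to the Lebesgue–Stieltjes measure μ of q (characterized by μ([0,t]) = q(t)), and t ↦ μ([0,t]) − ∑_{0<s≤t} (Δx(s))² is continuous and nondecreasing. -/
open Filter Topology MeasureTheory

noncomputable section

/-- A sequence of partitions `π_n = (0 = t^n_0 < t^n_1 < ... < t^n_{k_n})` of `[0,∞)`,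
with last point tending to `∞` and mesh tending to `0` uniformly on compact sets. -/
structure PartitionSeq where
  t : ℕ → ℕ → ℝ
  k : ℕ → ℕ
  zero : ∀ n, t n 0 = 0
  strict : ∀ n, ∀ i < k n, t n i < t n (i + 1)
  tendsto_top : Tendsto (fun n => t n (k n)) atTop atTop
  mesh : ∀ T > (0 : ℝ), ∀ ε > (0 : ℝ), ∃ N, ∀ n ≥ N, ∀ i < k n,
      t n (i + 1) ≤ T → t n (i + 1) - t n i < ε

/-- `q_n(u) = ∑_{i : t^n_i ≤ u} (x(t^n_{i+1}) - x(t^n_i))²`. -/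
def qSum (P : PartitionSeq) (x : ℝ → ℝ) (n : ℕ) (u : ℝ) : ℝ :=
  ∑ i ∈ (Finset.range (P.k n)).filter fun i => P.t n i ≤ u,
    (x (P.t n (i + 1)) - x (P.t n i)) ^ 2

/-- Left limit `q_n(u-) = ∑_{i : t^n_i < u} (x(t^n_{i+1}) - x(t^n_i))²`. -/
def qSumLt (P : PartitionSeq) (x : ℝ → ℝ) (n : ℕ) (u : ℝ) : ℝ :=
  ∑ i ∈ (Finset.range (P.k n)).filter fun i => P.t n i < u,
    (x (P.t n (i + 1)) - x (P.t n i)) ^ 2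

/-- `s_n(u) = ∑_i (x(t^n_{i+1} ∧ u) - x(t^n_i ∧ u))²`. -/
def sSum (P : PartitionSeq) (x : ℝ → ℝ) (n : ℕ) (u : ℝ) : ℝ :=
  ∑ i ∈ Finset.range (P.k n),
    (x (min (P.t n (i + 1)) u) - x (min (P.t n i) u)) ^ 2

/-- `x` is càdlàg on `[0,∞)`: right-continuous at every `t ≥ 0` and
with a left limit at every `t > 0`. -/
def IsCadlag (x : ℝ → ℝ) : Prop :=
  (∀ t : ℝ, 0 ≤ t → Tendsto x (nhdsWithin t (Set.Ici t)) (nhds (x t))) ∧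
  (∀ t : ℝ, 0 < t → ∃ l : ℝ, Tendsto x (nhdsWithin t (Set.Iio t)) (nhds l))

/-- The jump `Δx(t) = x(t) - x(t-)` (with `Δx(t) = 0` for `t ≤ 0`). -/
def jump (x : ℝ → ℝ) (s : ℝ) : ℝ :=
  if 0 < s then x s - Function.leftLim x s else 0

/-- `∑_{0 < s ≤ t} (Δx(s))²`. -/
def jumpSumSq (x : ℝ → ℝ) (t : ℝ) : ℝ :=
  ∑' s : Set.Ioc (0 : ℝ) t, (jump x s) ^ 2

/-- Vague convergence on `[0,∞)` of the discrete measures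
`μ_n = ∑_i (x(t^n_{i+1}) - x(t^n_i))² δ_{t^n_i}` to `μ`: the integrals of every
continuous compactly supported test function converge. -/
def VagueTo (P : PartitionSeq) (x : ℝ → ℝ) (μ : Measure ℝ) : Prop :=
  ∀ f : ℝ → ℝ, Continuous f → HasCompactSupport f →
    Tendsto (fun n => ∑ i ∈ Finset.range (P.k n),
        (x (P.t n (i + 1)) - x (P.t n i)) ^ 2 * f (P.t n i))
      atTop (nhds (∫ s, f s ∂μ))

/-- The Lebesgue decomposition property: `q(t) - ∑_{0<s≤t} (Δx(s))²` is a
continuous nondecreasing function on `[0,∞)` (the jumps being square-summable). -/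
def JumpDecomp (x : ℝ → ℝ) (q : ℝ → ℝ) : Prop :=
  (∀ t : ℝ, 0 ≤ t → Summable fun s : Set.Ioc (0 : ℝ) t => (jump x s) ^ 2) ∧
  ContinuousOn (fun t => q t - jumpSumSq x t) (Set.Ici 0) ∧
  MonotoneOn (fun t => q t - jumpSumSq x t) (Set.Ici 0)

/-- `μ` witnesses that `x ∈ Q0^π`: `μ` is a locally finite (Radon) measure on `[0,∞)`,
the discrete measures `μ_n` converge vaguely to `μ`, and
`t ↦ μ([0,t]) - ∑_{0<s≤t}(Δx(s))²` is continuous and nondecreasing. -/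
def Q0Data (P : PartitionSeq) (x : ℝ → ℝ) (μ : Measure ℝ) : Prop :=
  IsLocallyFiniteMeasure μ ∧ μ (Set.Iio 0) = 0 ∧ VagueTo P x μ ∧
  JumpDecomp x fun t => (μ (Set.Icc 0 t)).toReal

/-- `x ∈ Q0^π`: `x` has quadratic variation along `π` in the sense of Föllmer. -/
def MemQ0 (P : PartitionSeq) (x : ℝ → ℝ) : Prop :=
  IsCadlag x ∧ ∃ μ : Measure ℝ, Q0Data P x μ


namespace Prop26

open Set

lemma t_nonneg (P : PartitionSeq) (n : ℕ) : ∀ i, i ≤ P.k n → 0 ≤ P.t n i := by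
  intro i
  induction i with
  | zero => intro _; simp [P.zero n]
  | succ j ih =>
    intro hj
    have hjk : j < P.k n := hj
    exact le_of_lt (lt_of_le_of_lt (ih hjk.le) (P.strict n j hjk))

lemma qSum_nonneg (P : PartitionSeq) (x : ℝ → ℝ) (n : ℕ) (u : ℝ) : 0 ≤ qSum P x n u :=
  Finset.sum_nonneg fun _ _ => sq_nonneg _

lemma qSum_mono (P : PartitionSeq) (x : ℝ → ℝ) (n : ℕ) {a b : ℝ} (h : a ≤ b) :
    qSum P x n a ≤ qSum P x n b := by
  classical
  apply Finset.sum_le_sum_of_subset_of_nonneg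
  · intro i hi
    simp only [Finset.mem_filter] at hi ⊢
    exact ⟨hi.1, hi.2.trans h⟩
  · exact fun i _ _ => sq_nonneg _

lemma jumpSumSq_eq_tsum_indicator (x : ℝ → ℝ) (t : ℝ) :
    jumpSumSq x t = ∑' s : ℝ, (Set.Ioc (0:ℝ) t).indicator (fun s => (jump x s) ^ 2) s :=
  tsum_subtype (Set.Ioc (0:ℝ) t) (fun s => (jump x s) ^ 2)

lemma summable_indicator_of_summable {x : ℝ → ℝ} {t : ℝ}
    (h : Summable fun s : Set.Ioc (0:ℝ) t => (jump x s) ^ 2) :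
    Summable ((Set.Ioc (0:ℝ) t).indicator (fun s => (jump x s) ^ 2)) := by
  rwa [← summable_subtype_iff_indicator]

lemma jumpSumSq_nonneg (x : ℝ → ℝ) (t : ℝ) : 0 ≤ jumpSumSq x t :=
  tsum_nonneg fun _ => sq_nonneg _

lemma jumpSumSq_mono {x : ℝ → ℝ} {a b : ℝ} (hab : a ≤ b)
    (hb : Summable fun s : Set.Ioc (0:ℝ) b => (jump x s) ^ 2) :
    jumpSumSq x a ≤ jumpSumSq x b := by
  rw [jumpSumSq_eq_tsum_indicator, jumpSumSq_eq_tsum_indicator]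
  have hbi := summable_indicator_of_summable hb
  have hai : Summable ((Set.Ioc (0:ℝ) a).indicator (fun s => (jump x s) ^ 2)) := by
    have : Set.Ioc (0:ℝ) a = Set.Ioc (0:ℝ) a ∩ Set.Ioc (0:ℝ) b :=
      (Set.inter_eq_left.mpr (Set.Ioc_subset_Ioc_right hab)).symm
    rw [this, ← Set.indicator_indicator]
    exact hbi.indicator _
  refine hai.tsum_le_tsum (fun s => ?_) hbi
  exact Set.indicator_le_indicator_of_subset (Set.Ioc_subset_Ioc_right hab)
    (fun _ => sq_nonneg _) s

lemma jumpSumSq_right_continuous {x : ℝ → ℝ} {t : ℝ} (ht : 0 ≤ t)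
    (h : Summable fun s : Set.Ioc (0:ℝ) (t+1) => (jump x s) ^ 2) :
    Tendsto (jumpSumSq x) (nhdsWithin t (Set.Ici t)) (nhds (jumpSumSq x t)) := by
  have hbi := summable_indicator_of_summable h
  have key : Tendsto (fun u => ∑' s : ℝ, (Set.Ioc (0:ℝ) u).indicator
      (fun s => (jump x s) ^ 2) s) (nhdsWithin t (Set.Ici t))
      (nhds (∑' s : ℝ, (Set.Ioc (0:ℝ) t).indicator (fun s => (jump x s) ^ 2) s)) := by
    apply tendsto_tsum_of_dominated_convergence hbi
    · intro s
      rcases le_or_gt s t with hst | hst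
      · apply Tendsto.congr' _ tendsto_const_nhds
        filter_upwards [self_mem_nhdsWithin] with u (hu : t ≤ u)
        by_cases h0 : 0 < s
        · rw [Set.indicator_of_mem (Set.mem_Ioc.mpr ⟨h0, hst⟩), Set.indicator_of_mem (Set.mem_Ioc.mpr ⟨h0, hst.trans hu⟩)]
        · rw [Set.indicator_of_notMem (fun hc => h0 hc.1),
            Set.indicator_of_notMem (fun hc => h0 hc.1)]
      · rw [Set.indicator_of_notMem (fun hc => absurd hc.2 (not_le.mpr hst))]
        apply Tendsto.congr' _ tendsto_const_nhds
        have : Set.Iio s ∈ nhdsWithin t (Set.Ici t) :=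
          nhdsWithin_le_nhds (Iio_mem_nhds hst)
        filter_upwards [this] with u (hu : u < s)
        rw [Set.indicator_of_notMem (fun hc => absurd hc.2 (not_le.mpr hu))]
    · have h1 : Set.Iio (t+1) ∈ nhdsWithin t (Set.Ici t) :=
        nhdsWithin_le_nhds (Iio_mem_nhds (by linarith))
      filter_upwards [h1] with u (hu : u < t + 1)
      intro s
      by_cases hs : s ∈ Set.Ioc (0:ℝ) u
      · rw [Set.indicator_of_mem hs, Real.norm_eq_abs, abs_of_nonneg (sq_nonneg _),
          Set.indicator_of_mem (Set.mem_Ioc.mpr ⟨hs.1, hs.2.trans hu.le⟩)]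
      · rw [Set.indicator_of_notMem hs]
        simpa using Set.indicator_nonneg (fun _ _ => sq_nonneg _) s
  simpa only [← jumpSumSq_eq_tsum_indicator] using key



set_option maxHeartbeats 1000000 in
lemma vague (P : PartitionSeq) (x : ℝ → ℝ) (q : ℝ → ℝ) (μ : Measure ℝ)
    [IsLocallyFiniteMeasure μ]
    (hq : ∀ t : ℝ, 0 ≤ t → Tendsto (fun n => qSum P x n t) atTop (nhds (q t)))
    (hq0 : ∀ t : ℝ, 0 ≤ t → 0 ≤ q t)
    (hqm : ∀ a b : ℝ, 0 ≤ a → a ≤ b → q a ≤ q b)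
    (h0 : (μ {(0:ℝ)}).toReal = q 0)
    (hIoc : ∀ a b : ℝ, 0 ≤ a → a ≤ b → (μ (Set.Ioc a b)).toReal = q b - q a)
    (hIio : μ (Set.Iio 0) = 0) :
    VagueTo P x μ := by
  classical
  intro f hf hsupp
  -- support bound
  obtain ⟨r, hr⟩ := hsupp.isBounded.subset_closedBall 0
  set M : ℝ := max r 0 with hM_def
  have hM0 : 0 ≤ M := le_max_right _ _
  have hfz : ∀ u : ℝ, M < u → f u = 0 := by
    intro u hu
    apply image_eq_zero_of_notMem_tsupport
    intro hmem
    have h1 := hr hmem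
    rw [Real.closedBall_eq_Icc] at h1
    have h2 : u ≤ r := by simpa using h1.2
    have h3 : u ≤ M := h2.trans (le_max_left _ _)
    linarith
  have hfu : UniformContinuous f :=
    hf.uniformContinuous_of_tendsto_cocompact hsupp.is_zero_at_infty
  have hfInt : Integrable f μ := hf.integrable_of_hasCompactSupport hsupp
  rw [Metric.tendsto_atTop]
  intro ε hε
  set B : ℝ := q (M + 2) + 1 with hB_def
  have hB1 : 1 ≤ B := by have := hq0 (M+2) (by linarith); linarith
  have hB_pos : 0 < B := by linarith
  set ε' : ℝ := ε / (2 * B + 2) with hε'_def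
  have hε'_pos : 0 < ε' := div_pos hε (by linarith)
  obtain ⟨δ, hδ_pos, hδ⟩ := Metric.uniformContinuous_iff.mp hfu ε' hε'_pos
  set h : ℝ := min δ 1 / 2 with hh_def
  have hh_pos : 0 < h := by
    have := lt_min hδ_pos one_pos; rw [hh_def]; linarith [lt_min hδ_pos one_pos]
  have hhδ : h < δ := by
    have h1 : min δ 1 ≤ δ := min_le_left _ _
    rw [hh_def]; linarith
  have hh2 : h ≤ 1/2 := by
    have h1 : min δ 1 ≤ 1 := min_le_right _ _
    rw [hh_def]; linarith
  set m : ℕ := ⌈M / h⌉₊ + 1 with hm_def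
  set S : ℝ := (m : ℝ) * h with hS_def
  have hceil_ge : M / h ≤ (⌈M / h⌉₊ : ℝ) := Nat.le_ceil _
  have hceil_lt : (⌈M / h⌉₊ : ℝ) < M / h + 1 :=
    Nat.ceil_lt_add_one (div_nonneg hM0 hh_pos.le)
  have hSM : M < S := by
    have h1 : M / h * h = M := div_mul_cancel₀ M hh_pos.ne'
    have h2 : (M / h) * h ≤ (⌈M / h⌉₊ : ℝ) * h := by
      apply mul_le_mul_of_nonneg_right hceil_ge hh_pos.le
    rw [hS_def, hm_def]
    push_cast
    nlinarith
  have hS1 : S ≤ M + 1 := by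
    have h2 : (⌈M / h⌉₊ : ℝ) * h < (M / h + 1) * h :=
      mul_lt_mul_of_pos_right hceil_lt hh_pos
    have h1 : M / h * h = M := div_mul_cancel₀ M hh_pos.ne'
    rw [hS_def, hm_def]
    push_cast
    nlinarith
  have hS0 : 0 ≤ S := hM0.trans hSM.le
  -- grid rounding
  set β : ℝ → ℕ := fun u => (⌈u / h⌉).toNat with hβ_def
  set φ : ℝ → ℝ := fun u => f ((β u : ℝ) * h) with hφ_def
  have hβ_cast : ∀ u : ℝ, 0 ≤ u → ((β u : ℤ) : ℝ) = ((⌈u / h⌉ : ℤ) : ℝ) := by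
    intro u hu
    rw [hβ_def]
    norm_cast
    exact Int.toNat_of_nonneg (Int.ceil_nonneg (div_nonneg hu hh_pos.le))
  have hgrid_ge : ∀ u : ℝ, 0 ≤ u → u ≤ (β u : ℝ) * h := by
    intro u hu
    have h1 : u / h ≤ ((⌈u / h⌉ : ℤ) : ℝ) := Int.le_ceil _
    have h2 : ((β u : ℤ) : ℝ) = ((⌈u / h⌉ : ℤ) : ℝ) := hβ_cast u hu
    rw [div_le_iff₀ hh_pos] at h1
    push_cast at h2 ⊢
    rw [h2]
    exact h1
  have hgrid_lt : ∀ u : ℝ, 0 ≤ u → (β u : ℝ) * h < u + h := by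
    intro u hu
    have h1 : ((⌈u / h⌉ : ℤ) : ℝ) < u / h + 1 := Int.ceil_lt_add_one _
    have h2 : ((β u : ℤ) : ℝ) = ((⌈u / h⌉ : ℤ) : ℝ) := hβ_cast u hu
    have h3 : (u / h + 1) * h = u + h := by field_simp
    have h4 := mul_lt_mul_of_pos_right h1 hh_pos
    rw [h3] at h4
    push_cast at h2
    rw [← h2] at h4
    exact h4
  have hφ_close : ∀ u : ℝ, 0 ≤ u → |f u - φ u| ≤ ε' := by
    intro u hu
    have h1 : dist u ((β u : ℝ) * h) < δ := by
      rw [Real.dist_eq, abs_of_nonpos (by linarith [hgrid_ge u hu])]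
      have := hgrid_lt u hu
      linarith
    have := hδ h1
    rw [Real.dist_eq] at this
    exact this.le
  have hφ_zero : ∀ u : ℝ, 0 ≤ u → M < u → φ u = 0 := by
    intro u hu hMu
    exact hfz _ (lt_of_lt_of_le hMu (hgrid_ge u hu))
  have hβ_le : ∀ u : ℝ, 0 ≤ u → (β u ≤ m ↔ u ≤ S) := by
    intro u hu
    have h2 := hβ_cast u hu
    constructor
    · intro hle
      have : ((β u : ℤ) : ℝ) ≤ (m : ℝ) := by exact_mod_cast hle
      rw [h2] at this
      have h4 : u / h ≤ (m : ℝ) := le_trans (Int.le_ceil _) (by exact_mod_cast this)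
      rw [div_le_iff₀ hh_pos] at h4
      rw [hS_def]; linarith
    · intro hle
      have h4 : u / h ≤ (m : ℝ) := by
        rw [div_le_iff₀ hh_pos]; rw [hS_def] at hle; linarith
      have h5 : (⌈u / h⌉ : ℤ) ≤ (m : ℤ) := Int.ceil_le.mpr (by exact_mod_cast h4)
      have : ((β u : ℤ) : ℝ) ≤ ((m : ℤ) : ℝ) := by
        rw [h2]; exact_mod_cast h5
      exact_mod_cast this
  have hβ_zero : ∀ u : ℝ, 0 ≤ u → (β u = 0 ↔ u ≤ 0) := by
    intro u hu
    constructor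
    · intro hz
      have h2 := hβ_cast u hu
      rw [hz] at h2
      have h3 : (⌈u / h⌉ : ℤ) = 0 := by exact_mod_cast h2.symm
      have h4 : u / h ≤ 0 := by
        have := Int.ceil_le.mp h3.le
        exact_mod_cast this
      have h5 : u / h = 0 := le_antisymm h4 (div_nonneg hu hh_pos.le)
      rcases div_eq_zero_iff.mp h5 with h6 | h6
      · exact h6.le
      · exact absurd h6 hh_pos.ne'
    · intro hu0
      have hu' : u = 0 := le_antisymm hu0 hu
      rw [hβ_def]; simp [hu', Int.ceil_zero]
  have hβ_succ : ∀ u : ℝ, 0 ≤ u → ∀ j : ℕ,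
      (β u = j + 1 ↔ (j : ℝ) * h < u ∧ u ≤ ((j : ℝ) + 1) * h) := by
    intro u hu j
    have h2 := hβ_cast u hu
    have key : β u = j + 1 ↔ (⌈u / h⌉ : ℤ) = ((j : ℤ) + 1) := by
      constructor
      · intro hβj
        have : ((β u : ℤ) : ℝ) = ((j : ℝ) + 1) := by rw [hβj]; push_cast; ring
        rw [h2] at this
        exact_mod_cast this
      · intro hc
        have : ((β u : ℤ) : ℝ) = ((j : ℝ) + 1) := by rw [h2, hc]; push_cast; ring
        exact_mod_cast this
    rw [key, Int.ceil_eq_iff]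
    constructor
    · rintro ⟨h1, h3⟩
      push_cast at h1 h3
      refine ⟨(lt_div_iff₀ hh_pos).mp (by linarith), ?_⟩
      have h5 := (div_le_iff₀ hh_pos).mp h3
      linarith
    · rintro ⟨h1, h3⟩
      constructor
      · have h4 : (j:ℝ) < u / h := (lt_div_iff₀ hh_pos).mpr h1
        push_cast
        linarith
      · have h5 : u / h ≤ (j:ℝ) + 1 := (div_le_iff₀ hh_pos).mpr (by linarith)
        push_cast
        linarith

  -- abbreviations
  set w : ℕ → ℕ → ℝ := fun n i => (x (P.t n (i + 1)) - x (P.t n i)) ^ 2 with hw_def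
  have hw_nonneg : ∀ n i, 0 ≤ w n i := fun n i => sq_nonneg _
  set T : ℕ → ℝ := fun n => ∑ i ∈ Finset.range (P.k n), w n i * φ (P.t n i) with hT_def
  have ht_nn : ∀ n, ∀ i ∈ Finset.range (P.k n), 0 ≤ P.t n i := fun n i hi =>
    t_nonneg P n i (Finset.mem_range.mp hi).le
  -- Claim A : the discrete sums are close to their discretized versions
  have hA : ∀ n, |(∑ i ∈ Finset.range (P.k n), w n i * f (P.t n i)) - T n|
      ≤ ε' * qSum P x n (M + 2) := by
    intro n
    have hsub : (∑ i ∈ Finset.range (P.k n), w n i * f (P.t n i)) - T n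
        = ∑ i ∈ Finset.range (P.k n), w n i * (f (P.t n i) - φ (P.t n i)) := by
      rw [hT_def, ← Finset.sum_sub_distrib]
      exact Finset.sum_congr rfl fun i _ => by ring
    rw [hsub]
    have hzero : ∀ i ∈ Finset.range (P.k n),
        w n i * (f (P.t n i) - φ (P.t n i)) ≠ 0 → P.t n i ≤ M := by
      intro i hi hne
      by_contra hgt
      push_neg at hgt
      rw [hfz _ hgt, hφ_zero _ (ht_nn n i hi) hgt] at hne
      simp at hne
    rw [← Finset.sum_filter_of_ne hzero]
    calc |∑ i ∈ (Finset.range (P.k n)).filter (fun i => P.t n i ≤ M),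
          w n i * (f (P.t n i) - φ (P.t n i))|
        ≤ ∑ i ∈ (Finset.range (P.k n)).filter (fun i => P.t n i ≤ M),
          |w n i * (f (P.t n i) - φ (P.t n i))| := Finset.abs_sum_le_sum_abs _ _
      _ ≤ ∑ i ∈ (Finset.range (P.k n)).filter (fun i => P.t n i ≤ M),
          ε' * w n i := by
          apply Finset.sum_le_sum
          intro i hi
          rw [abs_mul, abs_of_nonneg (hw_nonneg n i), mul_comm (w n i)]
          exact mul_le_mul_of_nonneg_right
            (hφ_close _ (ht_nn n i (Finset.mem_filter.mp hi).1)) (hw_nonneg n i)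
      _ = ε' * qSum P x n M := by rw [← Finset.mul_sum]; rfl
      _ ≤ ε' * qSum P x n (M + 2) :=
          mul_le_mul_of_nonneg_left (qSum_mono P x n (by linarith)) hε'_pos.le
  -- Claim B : the discretized sum as a combination of the q_n at grid points
  have hB : ∀ n, T n = f 0 * qSum P x n 0 + ∑ j ∈ Finset.range m,
      f (((j:ℝ)+1) * h) * (qSum P x n (((j:ℝ)+1) * h) - qSum P x n ((j:ℝ) * h)) := by
    intro n
    have hstep1 : T n = ∑ i ∈ (Finset.range (P.k n)).filter (fun i => P.t n i ≤ S),
        w n i * φ (P.t n i) := by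
      rw [hT_def, Finset.sum_filter_of_ne]
      intro i hi hne
      by_contra hgt
      push_neg at hgt
      rw [hφ_zero _ (ht_nn n i hi) (hSM.trans hgt)] at hne
      simp at hne
    have hmaps : ∀ i ∈ (Finset.range (P.k n)).filter (fun i => P.t n i ≤ S),
        β (P.t n i) ∈ Finset.range (m+1) := by
      intro i hi
      rw [Finset.mem_range, Nat.lt_succ_iff]
      have hi' := Finset.mem_filter.mp hi
      exact (hβ_le _ (ht_nn n i hi'.1)).mpr hi'.2
    rw [hstep1, ← Finset.sum_fiberwise_of_maps_to hmaps
      (fun i => w n i * φ (P.t n i)), Finset.sum_range_succ']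
    -- fiber 0
    have hfib0 : ∑ i ∈ ((Finset.range (P.k n)).filter (fun i => P.t n i ≤ S)).filter
        (fun i => β (P.t n i) = 0), w n i * φ (P.t n i) = f 0 * qSum P x n 0 := by
      rw [Finset.filter_filter]
      have hset : (Finset.range (P.k n)).filter (fun i => P.t n i ≤ S ∧ β (P.t n i) = 0)
          = (Finset.range (P.k n)).filter (fun i => P.t n i ≤ 0) := by
        apply Finset.filter_congr
        intro i hi
        constructor
        · rintro ⟨_, hb⟩
          exact (hβ_zero _ (ht_nn n i hi)).mp hb
        · intro h0
          exact ⟨h0.trans hS0, (hβ_zero _ (ht_nn n i hi)).mpr h0⟩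
      rw [hset]
      have : ∀ i ∈ (Finset.range (P.k n)).filter (fun i => P.t n i ≤ 0),
          w n i * φ (P.t n i) = f 0 * w n i := by
        intro i hi
        have hi' := Finset.mem_filter.mp hi
        have hb0 : β (P.t n i) = 0 := (hβ_zero _ (ht_nn n i hi'.1)).mpr hi'.2
        rw [hφ_def]
        simp only [hb0, Nat.cast_zero, zero_mul]
        ring
      rw [Finset.sum_congr rfl this, ← Finset.mul_sum]
      rfl
    -- fiber j+1
    have hfibS : ∀ j ∈ Finset.range m,
        ∑ i ∈ ((Finset.range (P.k n)).filter (fun i => P.t n i ≤ S)).filter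
          (fun i => β (P.t n i) = j + 1), w n i * φ (P.t n i)
        = f (((j:ℝ)+1) * h) * (qSum P x n (((j:ℝ)+1) * h) - qSum P x n ((j:ℝ) * h)) := by
      intro j hj
      have hjm : (j : ℕ) + 1 ≤ m := Finset.mem_range.mp hj
      have hjS : ((j:ℝ)+1) * h ≤ S := by
        rw [hS_def]
        apply mul_le_mul_of_nonneg_right _ hh_pos.le
        exact_mod_cast hjm
      rw [Finset.filter_filter]
      have hset : (Finset.range (P.k n)).filter (fun i => P.t n i ≤ S ∧ β (P.t n i) = j + 1)
          = (Finset.range (P.k n)).filter (fun i => P.t n i ≤ ((j:ℝ)+1) * h)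
            \ (Finset.range (P.k n)).filter (fun i => P.t n i ≤ (j:ℝ) * h) := by
        ext i
        simp only [Finset.mem_filter, Finset.mem_sdiff, not_and]
        constructor
        · rintro ⟨hi, _, hb⟩
          have := (hβ_succ _ (ht_nn n i hi) j).mp hb
          exact ⟨⟨hi, this.2⟩, fun _ => not_le.mpr this.1⟩
        · rintro ⟨⟨hi, hub⟩, hnl⟩
          have hlb : ¬ P.t n i ≤ (j:ℝ) * h := hnl hi
          refine ⟨hi, hub.trans hjS, ?_⟩
          exact (hβ_succ _ (ht_nn n i hi) j).mpr ⟨not_le.mp hlb, hub⟩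
      rw [hset]
      have hterm : ∀ i ∈ (Finset.range (P.k n)).filter (fun i => P.t n i ≤ ((j:ℝ)+1) * h)
            \ (Finset.range (P.k n)).filter (fun i => P.t n i ≤ (j:ℝ) * h),
          w n i * φ (P.t n i) = f (((j:ℝ)+1) * h) * w n i := by
        intro i hi
        rw [Finset.mem_sdiff, Finset.mem_filter] at hi
        obtain ⟨⟨hir, hub⟩, hnl⟩ := hi
        have hlb : ¬ P.t n i ≤ (j:ℝ) * h := fun hc =>
          hnl (Finset.mem_filter.mpr ⟨hir, hc⟩)
        have hb : β (P.t n i) = j + 1 :=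
          (hβ_succ _ (ht_nn n i hir) j).mpr ⟨not_le.mp hlb, hub⟩
        rw [hφ_def]
        simp only [hb]
        push_cast
        ring
      rw [Finset.sum_congr rfl hterm, ← Finset.mul_sum,
        Finset.sum_sdiff_eq_sub (by
          intro i hi
          rw [Finset.mem_filter] at hi ⊢
          exact ⟨hi.1, hi.2.trans (by nlinarith [hh_pos.le])⟩)]
      rfl
    rw [hfib0, Finset.sum_congr rfl hfibS, add_comm]
  -- the limit of T n
  set L : ℝ := f 0 * q 0 + ∑ j ∈ Finset.range m,
      f (((j:ℝ)+1) * h) * (q (((j:ℝ)+1) * h) - q ((j:ℝ) * h)) with hL_def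
  have hT_lim : Tendsto T atTop (nhds L) := by
    rw [hL_def]
    have h1 : Tendsto (fun n => f 0 * qSum P x n 0) atTop (nhds (f 0 * q 0)) :=
      (hq 0 le_rfl).const_mul _
    have h2 : Tendsto (fun n => ∑ j ∈ Finset.range m,
        f (((j:ℝ)+1) * h) * (qSum P x n (((j:ℝ)+1) * h) - qSum P x n ((j:ℝ) * h))) atTop
        (nhds (∑ j ∈ Finset.range m,
          f (((j:ℝ)+1) * h) * (q (((j:ℝ)+1) * h) - q ((j:ℝ) * h)))) := by
      apply tendsto_finset_sum
      intro j _
      exact ((hq _ (by positivity)).sub (hq _ (by positivity))).const_mul _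
    exact Tendsto.congr (fun n => (hB n).symm) (h1.add h2)
  -- integral computations
  have hIocfin : ∀ a b : ℝ, μ (Set.Ioc a b) ≠ ⊤ := fun a b =>
    ((measure_mono Set.Ioc_subset_Icc_self).trans_lt (isCompact_Icc.measure_lt_top)).ne
  have hIoiS : ∫ u in Set.Ioi S, f u ∂μ = 0 := by
    rw [setIntegral_congr_fun measurableSet_Ioi
      (g := fun _ => (0:ℝ)) (fun u hu => hfz u (hSM.trans hu))]
    exact integral_zero _ _
  have hIio0 : ∫ u in Set.Iio 0, f u ∂μ = 0 := setIntegral_measure_zero _ hIio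
  have hIcc_eq : ∫ u, f u ∂μ = ∫ u in Set.Icc 0 S, f u ∂μ := by
    have hdisj : Disjoint (Set.Icc (0:ℝ) S) (Set.Ioi S) := by
      rw [Set.disjoint_left]; intro u hu hu'; exact absurd hu.2 (not_le.mpr hu')
    have hsplit : ∫ u in Set.Ici (0:ℝ), f u ∂μ
        = ∫ u in Set.Icc 0 S, f u ∂μ + ∫ u in Set.Ioi S, f u ∂μ := by
      rw [← Set.Icc_union_Ioi_eq_Ici hS0]
      exact setIntegral_union hdisj measurableSet_Ioi hfInt.integrableOn hfInt.integrableOn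
    have htotal := integral_add_compl (s := Set.Iio (0:ℝ)) measurableSet_Iio hfInt
    rw [Set.compl_Iio] at htotal
    rw [← htotal, hIio0, hsplit, hIoiS]
    ring
  have hdecomp : ∀ J : ℕ, ∫ u in Set.Icc 0 ((J:ℝ) * h), f u ∂μ
      = (∫ u in ({0} : Set ℝ), f u ∂μ)
        + ∑ j ∈ Finset.range J, ∫ u in Set.Ioc ((j:ℝ)*h) (((j:ℝ)+1)*h), f u ∂μ := by
    intro J
    induction J with
    | zero =>
        simp only [Nat.cast_zero, zero_mul, Set.Icc_self, Finset.range_zero,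
          Finset.sum_empty, add_zero]
    | succ J ih =>
      have hJ0 : (0:ℝ) ≤ (J:ℝ) * h := by positivity
      have hJle : (J:ℝ) * h ≤ ((J:ℝ)+1) * h := by nlinarith [hh_pos.le]
      push_cast
      have hunion : Set.Icc (0:ℝ) (((J:ℝ)+1) * h)
          = Set.Icc 0 ((J:ℝ)*h) ∪ Set.Ioc ((J:ℝ)*h) (((J:ℝ)+1)*h) :=
        (Set.Icc_union_Ioc_eq_Icc hJ0 hJle).symm
      have hdisj : Disjoint (Set.Icc (0:ℝ) ((J:ℝ)*h)) (Set.Ioc ((J:ℝ)*h) (((J:ℝ)+1)*h)) := by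
        rw [Set.disjoint_left]; intro u hu hu'; exact absurd hu.2 (not_le.mpr hu'.1)
      rw [hunion, setIntegral_union hdisj measurableSet_Ioc hfInt.integrableOn
        hfInt.integrableOn, ih, Finset.sum_range_succ, add_assoc]
  have hsing : ∫ u in ({0} : Set ℝ), f u ∂μ = f 0 * q 0 := by
    rw [integral_singleton, measureReal_def, h0, smul_eq_mul, mul_comm]
  have hpiece : ∀ j : ℕ, |(∫ u in Set.Ioc ((j:ℝ)*h) (((j:ℝ)+1)*h), f u ∂μ)
      - f (((j:ℝ)+1)*h) * (q (((j:ℝ)+1)*h) - q ((j:ℝ)*h))|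
      ≤ ε' * (q (((j:ℝ)+1)*h) - q ((j:ℝ)*h)) := by
    intro j
    set a : ℝ := (j:ℝ)*h with ha_def
    set b : ℝ := ((j:ℝ)+1)*h with hb_def
    have ha0 : 0 ≤ a := by positivity
    have hab : a ≤ b := by rw [ha_def, hb_def]; nlinarith [hh_pos.le]
    have hqab := hIoc a b ha0 hab
    have hsub : (∫ u in Set.Ioc a b, f u ∂μ) - f b * (q b - q a)
        = ∫ u in Set.Ioc a b, (f u - f b) ∂μ := by
      rw [integral_sub hfInt.integrableOn
        (integrableOn_const (hIocfin a b)),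
        setIntegral_const, smul_eq_mul, measureReal_def, hqab]
      ring
    rw [hsub]
    have hbd : ∀ u ∈ Set.Ioc a b, ‖f u - f b‖ ≤ ε' := by
      intro u hu
      have hd : dist u b < δ := by
        rw [Real.dist_eq, abs_of_nonpos (by linarith [hu.2] : u - b ≤ 0)]
        have h1 := hu.1
        rw [ha_def] at h1
        rw [hb_def]
        linarith
      have h2 := hδ hd
      rw [Real.dist_eq] at h2
      exact h2.le
    have hnorm := norm_setIntegral_le_of_norm_le_const
      (lt_top_iff_ne_top.mpr (hIocfin a b)) hbd
    rw [measureReal_def, hqab] at hnorm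
    simpa [Real.norm_eq_abs] using hnorm
  have hLI : |L - ∫ u, f u ∂μ| ≤ ε' * B := by
    rw [hIcc_eq]
    have hSm : ∫ u in Set.Icc 0 S, f u ∂μ = (∫ u in ({0}:Set ℝ), f u ∂μ)
        + ∑ j ∈ Finset.range m, ∫ u in Set.Ioc ((j:ℝ)*h) (((j:ℝ)+1)*h), f u ∂μ :=
      hdecomp m
    rw [hSm, hsing]
    have key : L - (f 0 * q 0
          + ∑ j ∈ Finset.range m, ∫ u in Set.Ioc ((j:ℝ)*h) (((j:ℝ)+1)*h), f u ∂μ)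
        = ∑ j ∈ Finset.range m, (f (((j:ℝ)+1)*h) * (q (((j:ℝ)+1)*h) - q ((j:ℝ)*h))
            - ∫ u in Set.Ioc ((j:ℝ)*h) (((j:ℝ)+1)*h), f u ∂μ) := by
      rw [hL_def, Finset.sum_sub_distrib]
      ring
    rw [key]
    calc |∑ j ∈ Finset.range m, (f (((j:ℝ)+1)*h) * (q (((j:ℝ)+1)*h) - q ((j:ℝ)*h))
            - ∫ u in Set.Ioc ((j:ℝ)*h) (((j:ℝ)+1)*h), f u ∂μ)|
        ≤ ∑ j ∈ Finset.range m, |f (((j:ℝ)+1)*h) * (q (((j:ℝ)+1)*h) - q ((j:ℝ)*h))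
            - ∫ u in Set.Ioc ((j:ℝ)*h) (((j:ℝ)+1)*h), f u ∂μ| :=
          Finset.abs_sum_le_sum_abs _ _
      _ ≤ ∑ j ∈ Finset.range m, ε' * (q (((j:ℝ)+1)*h) - q ((j:ℝ)*h)) := by
          apply Finset.sum_le_sum
          intro j _
          rw [abs_sub_comm]
          exact hpiece j
      _ = ε' * (q ((m:ℝ)*h) - q 0) := by
          rw [← Finset.mul_sum]
          congr 1
          have key := Finset.sum_range_sub (fun j : ℕ => q ((j:ℝ)*h)) m
          push_cast at key
          simp only [zero_mul] at key
          have hmc : ((m:ℝ)) = (⌈M/h⌉₊ : ℝ) + 1 := by rw [hm_def]; push_cast; ring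
          rw [hmc] at key ⊢
          exact key
      _ ≤ ε' * B := by
          have h1 : q ((m:ℝ)*h) ≤ q (M+2) := by
            apply hqm _ _ (by positivity)
            have : (m:ℝ)*h = S := hS_def.symm
            linarith [hS1]
          have h2 : 0 ≤ q 0 := hq0 0 le_rfl
          have h3 : q ((m:ℝ)*h) - q 0 ≤ B := by rw [hB_def]; linarith
          exact mul_le_mul_of_nonneg_left h3 hε'_pos.le
  -- final assembly
  obtain ⟨N₁, hN₁⟩ := Metric.tendsto_atTop.mp hT_lim ε' hε'_pos
  have hBnd : ∀ᶠ n in atTop, qSum P x n (M+2) ≤ B :=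
    ((hq (M+2) (by linarith)).eventually_lt_const
      (by rw [hB_def]; linarith)).mono fun n hn => hn.le
  obtain ⟨N₂, hN₂⟩ := eventually_atTop.mp hBnd
  refine ⟨max N₁ N₂, fun n hn => ?_⟩
  have hn1 : N₁ ≤ n := le_trans (le_max_left _ _) hn
  have hn2 : N₂ ≤ n := le_trans (le_max_right _ _) hn
  have e1 : |(∑ i ∈ Finset.range (P.k n), w n i * f (P.t n i)) - T n| ≤ ε' * B :=
    (hA n).trans (mul_le_mul_of_nonneg_left (hN₂ n hn2) hε'_pos.le)
  have e2 : |T n - L| < ε' := by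
    have := hN₁ n hn1
    rwa [Real.dist_eq] at this
  rw [Real.dist_eq]
  have tri : |(∑ i ∈ Finset.range (P.k n), w n i * f (P.t n i)) - ∫ u, f u ∂μ|
      ≤ |(∑ i ∈ Finset.range (P.k n), w n i * f (P.t n i)) - T n|
        + |T n - L| + |L - ∫ u, f u ∂μ| := by
    have t1 := abs_sub_le (∑ i ∈ Finset.range (P.k n), w n i * f (P.t n i)) (T n)
      (∫ u, f u ∂μ)
    have t2 := abs_sub_le (T n) L (∫ u, f u ∂μ)
    linarith
  have hfin : ε' * (2*B+2) = ε := div_mul_cancel₀ ε (by linarith)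
  linarith


end Prop26

/-- **Proposition 2.6.** If `x ∈ Q2^π` with pointwise limit `q` of the sums `q_n`, then
`x ∈ Q0^π` and `[x]_π = q`: the discrete measures `μ_n` converge vaguely on `[0,∞)` to the
Lebesgue–Stieltjes measure `μ` of `q` (i.e. `μ([0,t]) = q(t)`), which is locally finite, and
`t ↦ μ([0,t]) - ∑_{0<s≤t}(Δx(s))²` is continuous and nondecreasing. -/
theorem prop_2_6 (P : PartitionSeq) (x : ℝ → ℝ) (q : ℝ → ℝ)
    (hx : IsCadlag x)
    (hq : ∀ t : ℝ, 0 ≤ t → Tendsto (fun n => qSum P x n t) atTop (nhds (q t)))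
    (hdec : JumpDecomp x q) :
    ∃ μ : Measure ℝ, Q0Data P x μ ∧ ∀ t : ℝ, 0 ≤ t → (μ (Set.Icc 0 t)).toReal = q t := by
  classical
  obtain ⟨hsum, hcont, hmono⟩ := hdec
  -- basic facts about q
  have hq_nonneg : ∀ t : ℝ, 0 ≤ t → 0 ≤ q t := fun t ht =>
    ge_of_tendsto (hq t ht) (Filter.Eventually.of_forall fun n => Prop26.qSum_nonneg P x n t)
  have hq_mono : ∀ a b : ℝ, 0 ≤ a → a ≤ b → q a ≤ q b := fun a b ha hab =>
    le_of_tendsto_of_tendsto' (hq a ha) (hq b (ha.trans hab))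
      (fun n => Prop26.qSum_mono P x n hab)
  -- right continuity of q on [0, ∞)
  have hq_rc : ∀ t : ℝ, 0 ≤ t →
      Tendsto q (nhdsWithin t (Set.Ici t)) (nhds (q t)) := by
    intro t ht
    have h1 : Tendsto (fun u => q u - jumpSumSq x u) (nhdsWithin t (Set.Ici t))
        (nhds (q t - jumpSumSq x t)) := by
      exact (hcont t ht).mono (Set.Ici_subset_Ici.mpr ht)
    have h2 := Prop26.jumpSumSq_right_continuous ht (hsum (t+1) (by linarith))
    have h3 := h1.add h2
    simp only [sub_add_cancel] at h3
    exact h3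
  -- the Stieltjes function
  set Fq : ℝ → ℝ := fun u => if 0 ≤ u then q u else 0 with hFq_def
  have hFq_mono : Monotone Fq := by
    intro a b hab
    simp only [hFq_def]
    by_cases ha : 0 ≤ a
    · rw [if_pos ha, if_pos (ha.trans hab)]
      exact hq_mono a b ha hab
    · rw [if_neg ha]
      by_cases hb : 0 ≤ b
      · rw [if_pos hb]; exact hq_nonneg b hb
      · rw [if_neg hb]
  have hFq_rc : ∀ u : ℝ, ContinuousWithinAt Fq (Set.Ici u) u := by
    intro u
    rcases lt_or_ge u 0 with hu | hu
    · have : Fq =ᶠ[nhds u] fun _ => (0:ℝ) := by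
        filter_upwards [Iio_mem_nhds hu] with v (hv : v < 0)
        simp [hFq_def, not_le.mpr hv]
      exact (continuousWithinAt_const).congr_of_eventuallyEq
        (this.filter_mono nhdsWithin_le_nhds) (by simp [hFq_def, not_le.mpr hu])
    · have heq : ∀ v ∈ Set.Ici u, Fq v = q v := fun v hv => by
        simp [hFq_def, le_trans hu hv]
      have : Tendsto Fq (nhdsWithin u (Set.Ici u)) (nhds (q u)) := by
        refine Tendsto.congr' ?_ (hq_rc u hu)
        filter_upwards [self_mem_nhdsWithin] with v hv using (heq v hv).symm
      unfold ContinuousWithinAt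
      rwa [heq u (Set.self_mem_Ici)]
  set F : StieltjesFunction ℝ := ⟨Fq, hFq_mono, hFq_rc⟩ with hF_def
  have hF_apply : ∀ u, F u = Fq u := fun u => rfl
  -- left limit at 0 is 0
  have hleft : Function.leftLim Fq 0 = 0 := by
    apply leftLim_eq_of_tendsto
    apply Tendsto.congr' _ (tendsto_const_nhds (x := (0:ℝ)))
    filter_upwards [self_mem_nhdsWithin] with v (hv : v < 0)
    simp [hFq_def, not_le.mpr hv]
  have hIcc : ∀ t : ℝ, 0 ≤ t → F.measure (Set.Icc 0 t) = ENNReal.ofReal (q t) := by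
    intro t ht
    rw [StieltjesFunction.measure_Icc]
    show ENNReal.ofReal (Fq t - Function.leftLim Fq 0) = _
    rw [hleft, sub_zero, hFq_def]
    simp [ht]
  have hIcc' : ∀ t : ℝ, 0 ≤ t → (F.measure (Set.Icc 0 t)).toReal = q t := by
    intro t ht
    rw [hIcc t ht, ENNReal.toReal_ofReal (hq_nonneg t ht)]
  have hIio : F.measure (Set.Iio 0) = 0 := by
    have hbot : Tendsto Fq atBot (nhds 0) := by
      apply Tendsto.congr' _ (tendsto_const_nhds (x := (0:ℝ)))
      filter_upwards [eventually_lt_atBot (0:ℝ)] with v (hv : v < 0)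
      simp [hFq_def, not_le.mpr hv]
    have hIic : ∀ c : ℝ, c < 0 → F.measure (Set.Iic c) = 0 := by
      intro c hc
      rw [StieltjesFunction.measure_Iic F hbot]
      show ENNReal.ofReal (Fq c - 0) = 0
      simp [hFq_def, not_le.mpr hc]
    have hU : Set.Iio (0:ℝ) = ⋃ n : ℕ, Set.Iic (-(1/((n:ℝ)+1))) := by
      ext y
      simp only [Set.mem_Iio, Set.mem_iUnion, Set.mem_Iic]
      constructor
      · intro hy
        obtain ⟨n, hn⟩ := exists_nat_one_div_lt (neg_pos.mpr hy)
        exact ⟨n, by linarith⟩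
      · rintro ⟨n, hn⟩
        have : (0:ℝ) < 1/((n:ℝ)+1) := by positivity
        linarith
    rw [hU]
    exact measure_iUnion_null fun n => hIic _ (by
      have : (0:ℝ) < 1/((n:ℝ)+1) := by positivity
      linarith)
  have h0' : (F.measure {(0:ℝ)}).toReal = q 0 := by
    rw [StieltjesFunction.measure_singleton]
    show (ENNReal.ofReal (Fq 0 - Function.leftLim Fq 0)).toReal = q 0
    rw [hleft, sub_zero, ENNReal.toReal_ofReal]
    · simp [hFq_def]
    · simp only [hFq_def, if_pos le_rfl]
      exact hq_nonneg 0 le_rfl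
  have hIoc' : ∀ a b : ℝ, 0 ≤ a → a ≤ b → (F.measure (Set.Ioc a b)).toReal = q b - q a := by
    intro a b ha hab
    rw [StieltjesFunction.measure_Ioc]
    show (ENNReal.ofReal (Fq b - Fq a)).toReal = q b - q a
    have hqa : Fq a = q a := by simp [hFq_def, ha]
    have hqb : Fq b = q b := by simp [hFq_def, ha.trans hab]
    rw [hqa, hqb, ENNReal.toReal_ofReal (by linarith [hq_mono a b ha hab])]
  have hvague : VagueTo P x F.measure :=
    Prop26.vague P x q F.measure hq hq_nonneg hq_mono h0' hIoc' hIio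
  refine ⟨F.measure, ⟨inferInstance, hIio, hvague, ?_⟩, hIcc'⟩
  · -- JumpDecomp for t ↦ (μ (Icc 0 t)).toReal
    refine ⟨hsum, ?_, ?_⟩
    · apply ContinuousOn.congr hcont
      intro t ht
      simp only [hIcc' t ht]
    · intro a ha b hb hab
      simp only [hIcc' a ha, hIcc' b hb]
      exact hmono ha hb hab

end
end

section
/- Let t₀ > 0 be a point that belongs to no partition π_n, and let x := 1_{[t₀,∞)} be the indicator function of [t₀,∞). Then lim_n s_n(t₀) = lim_n q_n(t₀) = 1, whereas the sums with right endpoints, p_n(t) := ∑_{i : t^n_{i+1} ≤ t} (x(t^n_{i+1}) − x(t^n_i))², satisfy lim_n p_n(t₀) = 0. -/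
open Filter Topology MeasureTheory

noncomputable section

lemma PartitionSeq.mono' (P : PartitionSeq) (n : ℕ) :
    ∀ j, j ≤ P.k n → ∀ i, i ≤ j → P.t n i ≤ P.t n j := by
  intro j
  induction j with
  | zero => intro _ i hi; obtain rfl : i = 0 := Nat.le_zero.mp hi; exact le_rfl
  | succ j ih =>
    intro hj i hi
    rcases Nat.lt_or_ge i (j + 1) with h | h
    · exact le_trans (ih (by omega) i (by omega)) (P.strict n j (by omega)).le
    · have : i = j + 1 := by omega
      subst this; exact le_rfl

/-- **Remark.** Let `t₀ > 0` belong to no partition `π_n` and let `x = 1_{[t₀,∞)}`.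
Then `lim_n s_n(t₀) = lim_n q_n(t₀) = 1`, while the sums with right endpoints
`p_n(t₀) = ∑_{t^n_{i+1} ≤ t₀} (x(t^n_{i+1}) - x(t^n_i))²` satisfy `lim_n p_n(t₀) = 0`. -/
theorem remark_right_endpoint_sums (P : PartitionSeq) (t₀ : ℝ) (ht₀ : 0 < t₀)
    (hnot : ∀ n, ∀ i ≤ P.k n, P.t n i ≠ t₀) :
    Tendsto (fun n => sSum P (Set.indicator (Set.Ici t₀) fun _ => (1 : ℝ)) n t₀)
        atTop (nhds 1) ∧
    Tendsto (fun n => qSum P (Set.indicator (Set.Ici t₀) fun _ => (1 : ℝ)) n t₀)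
        atTop (nhds 1) ∧
    Tendsto (fun n => ∑ i ∈ (Finset.range (P.k n)).filter fun i => P.t n (i + 1) ≤ t₀,
          ((Set.indicator (Set.Ici t₀) fun _ => (1 : ℝ)) (P.t n (i + 1)) -
            (Set.indicator (Set.Ici t₀) fun _ => (1 : ℝ)) (P.t n i)) ^ 2)
        atTop (nhds 0) := by
  classical
  set x : ℝ → ℝ := Set.indicator (Set.Ici t₀) fun _ => (1 : ℝ) with hx
  have hxval : ∀ s : ℝ, x s = if t₀ ≤ s then 1 else 0 := by
    intro s; simp [hx, Set.indicator_apply, Set.mem_Ici]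
  have hxmin : ∀ s : ℝ, x (min s t₀) = if t₀ ≤ s then 1 else 0 := by
    intro s; rw [hxval]; simp [le_min_iff]
  have mono : ∀ n i j, i ≤ j → j ≤ P.k n → P.t n i ≤ P.t n j :=
    fun n i j hij hj => P.mono' n j hj i hij
  have key : ∀ n, t₀ < P.t n (P.k n) →
      sSum P x n t₀ = 1 ∧ qSum P x n t₀ = 1 ∧
      (∑ i ∈ (Finset.range (P.k n)).filter fun i => P.t n (i + 1) ≤ t₀,
        (x (P.t n (i + 1)) - x (P.t n i)) ^ 2) = 0 := by
    intro n hn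
    have hex : ∃ j, t₀ < P.t n j := ⟨P.k n, hn⟩
    set c := Nat.find hex with hc
    have hcspec : t₀ < P.t n c := Nat.find_spec hex
    have hck : c ≤ P.k n := Nat.find_le hn
    have hc0 : c ≠ 0 := by
      intro h; rw [h, P.zero] at hcspec; linarith
    set m := c - 1 with hmdef
    have hmc : m + 1 = c := by omega
    have hmk : m < P.k n := by omega
    have hlt : P.t n m < t₀ := by
      have h1 : ¬ t₀ < P.t n m := Nat.find_min hex (by omega)
      exact lt_of_le_of_ne (not_lt.mp h1) (hnot n m (by omega))
    have hgt : t₀ < P.t n (m + 1) := by rw [hmc]; exact hcspec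
    -- term analysis
    have hbelow : ∀ i, i < m → P.t n (i + 1) < t₀ := fun i h =>
      lt_of_le_of_lt (mono n (i + 1) m h (by omega)) hlt
    have hbelow' : ∀ i, i ≤ m → P.t n i < t₀ := fun i h =>
      lt_of_le_of_lt (mono n i m h (by omega)) hlt
    have habove : ∀ i, m < i → i ≤ P.k n → t₀ < P.t n i := fun i h hik =>
      lt_of_lt_of_le hgt (mono n (m + 1) i h hik)
    have hterm : ∀ i, i < P.k n →
        (x (P.t n (i + 1)) - x (P.t n i)) ^ 2 = if i = m then 1 else 0 := by
      intro i hi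
      rcases lt_trichotomy i m with h | h | h
      · rw [hxval, hxval, if_neg (not_le.mpr (hbelow i h)),
          if_neg (not_le.mpr (hbelow' i h.le)), if_neg (by omega)]; ring
      · subst h
        rw [hxval, hxval, if_pos hgt.le, if_neg (not_le.mpr hlt), if_pos rfl]; ring
      · rw [hxval, hxval, if_pos (habove (i + 1) (by omega) (by omega)).le,
          if_pos (habove i h hi.le).le, if_neg (by omega)]; ring
    have hsum1 : (∑ i ∈ Finset.range (P.k n), if i = m then (1 : ℝ) else 0) = 1 := by
      rw [Finset.sum_ite_eq' (Finset.range (P.k n)) m fun _ => (1 : ℝ),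
        if_pos (Finset.mem_range.mpr hmk)]
    refine ⟨?_, ?_, ?_⟩
    · rw [sSum]
      rw [show (∑ i ∈ Finset.range (P.k n),
          (x (min (P.t n (i + 1)) t₀) - x (min (P.t n i) t₀)) ^ 2)
          = ∑ i ∈ Finset.range (P.k n), if i = m then (1 : ℝ) else 0 from ?_, hsum1]
      refine Finset.sum_congr rfl fun i hi => ?_
      have hi' := Finset.mem_range.mp hi
      rcases lt_trichotomy i m with h | h | h
      · rw [hxmin, hxmin, if_neg (not_le.mpr (hbelow i h)),
          if_neg (not_le.mpr (hbelow' i h.le)), if_neg (by omega)]; ring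
      · subst h
        rw [hxmin, hxmin, if_pos hgt.le, if_neg (not_le.mpr hlt), if_pos rfl]; ring
      · rw [hxmin, hxmin, if_pos (habove (i + 1) (by omega) (by omega)).le,
          if_pos (habove i h hi'.le).le, if_neg (by omega)]; ring
    · rw [qSum, Finset.sum_filter]
      rw [show (∑ i ∈ Finset.range (P.k n), if P.t n i ≤ t₀ then
          (x (P.t n (i + 1)) - x (P.t n i)) ^ 2 else 0)
          = ∑ i ∈ Finset.range (P.k n), if i = m then (1 : ℝ) else 0 from ?_, hsum1]
      refine Finset.sum_congr rfl fun i hi => ?_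
      have hi' := Finset.mem_range.mp hi
      by_cases hcond : P.t n i ≤ t₀
      · rw [if_pos hcond, hterm i hi']
      · rw [if_neg hcond, if_neg ?_]
        intro h; subst h; exact hcond hlt.le
    · refine Finset.sum_eq_zero fun i hi => ?_
      obtain ⟨hi1, hi2⟩ := Finset.mem_filter.mp hi
      have hi' := Finset.mem_range.mp hi1
      have h1 : P.t n (i + 1) < t₀ :=
        lt_of_le_of_ne hi2 (hnot n (i + 1) (by omega))
      have h0 : P.t n i < t₀ := lt_trans (P.strict n i hi') h1
      rw [hxval, hxval, if_neg (not_le.mpr h1), if_neg (not_le.mpr h0)]; ring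
  have hev : ∀ᶠ n in atTop, t₀ < P.t n (P.k n) := P.tendsto_top.eventually_gt_atTop t₀
  exact ⟨Tendsto.congr' (hev.mono fun n hn => ((key n hn).1).symm) tendsto_const_nhds,
    Tendsto.congr' (hev.mono fun n hn => ((key n hn).2.1).symm) tendsto_const_nhds,
    Tendsto.congr' (hev.mono fun n hn => ((key n hn).2.2).symm) tendsto_const_nhds⟩

end
end
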